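/- Let ϖ : G →+ G be an additive endomorphism and let ξ : G → ℂ take only nonzero values and satisfy ξ(g+h) = ξ(g)·ξ(h)·χ_{ϖ(g)}(h) for all g, h ∈ G (i.e. ξ is quadratic with endomorphism ϖ). Let D_ξ ∈ Matrix G G ℂ be the diagonal matrix with entries (D_ξ)_{g,g} = ξ(g). Then for every g ∈ G: D_ξ·X(g)·D_ξ⁻¹ = ξ(g) • (X(g)·Z(ϖ(g))) and D_ξ·Z(g)·D_ξ⁻¹ = Z(g). -/

import Mathlib

/-- The character `χ_g` of the finite abelian group `G = ∀ i, ZMod (d i)`. -/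
noncomputable def chi {m : ℕ} {d : Fin m → ℕ} (g h : ∀ i, ZMod (d i)) : ℂ :=
  Complex.exp (2 * Real.pi * Complex.I *
    ∑ i, ((g i).val : ℂ) * ((h i).val : ℂ) / ((d i : ℕ) : ℂ))

/-- The Pauli `X`-type matrix: `X(g)_{h,k} = 1` if `h = k + g`, else `0`. -/
noncomputable def Xop {m : ℕ} {d : Fin m → ℕ} (g : ∀ i, ZMod (d i)) :
    Matrix (∀ i, ZMod (d i)) (∀ i, ZMod (d i)) ℂ :=
  Matrix.of fun h k => if h = k + g then (1 : ℂ) else 0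

/-- The Pauli `Z`-type matrix: the diagonal matrix with entries `χ_g(h)`. -/
noncomputable def Zop {m : ℕ} {d : Fin m → ℕ} (g : ∀ i, ZMod (d i)) :
    Matrix (∀ i, ZMod (d i)) (∀ i, ZMod (d i)) ℂ :=
  Matrix.diagonal fun h => chi g h

/-- Conjugation of `X(g)` and `Z(g)` by the quadratic phase gate `D_ξ`, where `ξ` is
quadratic with endomorphism `ϖ`: `D_ξ X(g) D_ξ⁻¹ = ξ(g) • X(g) Z(ϖ(g))` and
`D_ξ Z(g) D_ξ⁻¹ = Z(g)`. -/
theorem stmt_13 (m : ℕ) (hm : 0 < m) (d : Fin m → ℕ) [∀ i, NeZero (d i)]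
    (ϖ : (∀ i, ZMod (d i)) →+ (∀ i, ZMod (d i)))
    (ξ : (∀ i, ZMod (d i)) → ℂ) (hξ0 : ∀ g, ξ g ≠ 0)
    (hq : ∀ g h, ξ (g + h) = ξ g * ξ h * chi (ϖ g) h)
    (D : Matrix (∀ i, ZMod (d i)) (∀ i, ZMod (d i)) ℂ)
    (hD : D = Matrix.diagonal ξ) :
    ∀ g, D * Xop g * D⁻¹ = ξ g • (Xop g * Zop (ϖ g)) ∧ D * Zop g * D⁻¹ = Zop g := by
  have hDinv : D⁻¹ = Matrix.diagonal (fun h => (ξ h)⁻¹) := by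
    rw [hD, Matrix.inv_diagonal]
    let u : ((∀ i, ZMod (d i)) → ℂ)ˣ :=
      ⟨ξ, fun h => (ξ h)⁻¹, funext fun h => mul_inv_cancel₀ (hξ0 h),
        funext fun h => inv_mul_cancel₀ (hξ0 h)⟩
    exact congrArg Matrix.diagonal (Ring.inverse_unit u)
  intro g
  rw [hDinv, hD]
  constructor
  · ext h k
    simp only [Matrix.mul_diagonal, Matrix.diagonal_mul, Matrix.smul_apply,
      Xop, Zop, Matrix.of_apply, smul_eq_mul]
    by_cases hhk : h = k + g
    · simp only [if_pos hhk, hhk, Matrix.mul_diagonal, Matrix.of_apply, if_pos rfl]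
      have := hq g k
      rw [add_comm k g, this]
      field_simp [hξ0 k]
    · simp [Matrix.mul_diagonal, Matrix.of_apply, if_neg hhk]
  · ext h k
    simp only [Zop, Matrix.mul_diagonal, Matrix.diagonal_mul, Matrix.diagonal_apply]
    by_cases hhk : h = k
    · simp only [hhk, if_pos rfl]
      simp
      rw [mul_comm (ξ k), mul_assoc, mul_inv_cancel₀ (hξ0 k), mul_one]
    · simp [if_neg hhk]
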